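/- arXiv:1701.07612 — 4 statements merged into one kernel-verified Lean document; each statement's English description precedes it below -/
import Mathlib

section
/- Let S¹ be the unit circle in ℂ. There exist two open subsets U₀, U₁ of S¹ × S¹ with U₀ ∪ U₁ = S¹ × S¹ such that the evaluation map e : P(S¹) → S¹ × S¹ admits a continuous section on U₀ and a continuous section on U₁. (Equivalently, the topological complexity of S¹ satisfies TC(S¹) ≤ 1.) -/
open unitInterval Complex

noncomputable section

abbrev Sph := ↥(Metric.sphere (0 : ℂ) 1)

lemma sph_abs (x : Sph) : ‖(x : ℂ)‖ = 1 := by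
  exact mem_sphere_zero_iff_norm.mp x.2

lemma sph_ne_zero (x : Sph) : (x : ℂ) ≠ 0 := by
  intro h
  have := sph_abs x
  simp [h] at this

/-- the "relative position" map -/
def gmap (p : Sph × Sph) : ℂ := (p.2 : ℂ) / (p.1 : ℂ)

lemma gmap_abs (p : Sph × Sph) : ‖gmap p‖ = 1 := by
  simp [gmap, map_div₀, sph_abs]

lemma gmap_cont : Continuous gmap :=
  (continuous_subtype_val.comp continuous_snd).div
    (continuous_subtype_val.comp continuous_fst) (fun p => sph_ne_zero p.1)

lemma unit_mem_slitPlane {z : ℂ} (hz : ‖z‖ = 1) (h : z ≠ -1) :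
    z ∈ Complex.slitPlane := by
  rw [Complex.mem_slitPlane_iff]
  by_contra hc
  push_neg at hc
  obtain ⟨hre, him⟩ := hc
  have hz' : z = (z.re : ℂ) := by
    apply Complex.ext <;> simp [him]
  rw [hz'] at hz
  rw [Complex.norm_real, Real.norm_eq_abs, abs_of_nonpos hre] at hz
  apply h
  rw [hz']
  have : z.re = -1 := by linarith
  rw [this]; norm_num

/-- Main auxiliary: for any `α`, over the set where `y/x ≠ -exp(αi)` there is a
continuous section of the evaluation map. -/
lemma section_exists (α : ℝ) :
    ∃ U : Set (Sph × Sph), IsOpen U ∧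
      U = {p | gmap p ≠ -Complex.exp (α * Complex.I)} ∧
      ∃ s : C(U, C(I, Sph)), ∀ a, ((s a) 0, (s a) 1) = (a : Sph × Sph) := by
  set U : Set (Sph × Sph) := {p | gmap p ≠ -Complex.exp (α * Complex.I)} with hU
  have hUopen : IsOpen U := by
    have : U = gmap ⁻¹' {-Complex.exp (α * Complex.I)}ᶜ := rfl
    rw [this]
    exact (isOpen_compl_singleton).preimage gmap_cont
  refine ⟨U, hUopen, rfl, ?_⟩
  -- the rotated relative position, lands in slitPlane on U
  set h : U × I → ℂ := fun q => gmap q.1.1 * Complex.exp (-(α : ℂ) * Complex.I) with hh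
  have habs : ∀ q : U × I, ‖h q‖ = 1 := by
    intro q
    have : (-(α : ℂ) * Complex.I) = ((-α : ℝ) : ℂ) * Complex.I := by push_cast; ring
    simp [hh, map_mul, gmap_abs, this, Complex.norm_exp_ofReal_mul_I]
  have hne : ∀ q : U × I, h q ≠ -1 := by
    intro q hq
    apply q.1.2
    have hexp : Complex.exp (-(α : ℂ) * Complex.I) * Complex.exp ((α : ℂ) * Complex.I) = 1 := by
      rw [← Complex.exp_add]; ring_nf; exact Complex.exp_zero
    have := congrArg (· * Complex.exp ((α : ℂ) * Complex.I)) hq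
    simp only [hh] at this
    calc gmap (q.1 : Sph × Sph)
        = gmap q.1.1 * (Complex.exp (-(α : ℂ) * Complex.I) * Complex.exp ((α : ℂ) * Complex.I)) := by
          rw [hexp, mul_one]
      _ = -Complex.exp ((α : ℂ) * Complex.I) := by rw [← mul_assoc]; simpa using this
  have hhc : Continuous h :=
    (gmap_cont.comp (continuous_subtype_val.comp continuous_fst)).mul continuous_const
  have hargc : Continuous fun q : U × I => Complex.arg (h q) := by
    rw [continuous_iff_continuousAt]
    intro q
    exact (Complex.continuousAt_arg (unit_mem_slitPlane (habs q) (hne q))).comp hhc.continuousAt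
  -- the full path map
  set F : U × I → ℂ := fun q =>
    (q.1.1.1 : ℂ) * Complex.exp ((((q.2 : ℝ) * (α + Complex.arg (h q))) : ℝ) * Complex.I)
    with hF
  have hFc : Continuous F := by
    apply Continuous.mul
    · exact continuous_subtype_val.comp (continuous_fst.comp
        (continuous_subtype_val.comp continuous_fst))
    · apply Complex.continuous_exp.comp
      apply Continuous.mul _ continuous_const
      apply Complex.continuous_ofReal.comp
      exact ((continuous_subtype_val.comp continuous_snd)).mul (continuous_const.add hargc)
  have hFmem : ∀ q : U × I, F q ∈ Metric.sphere (0 : ℂ) 1 := by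
    intro q
    rw [mem_sphere_zero_iff_norm]
    simp only [hF]
    rw [norm_mul, sph_abs, one_mul, Complex.norm_exp_ofReal_mul_I]
  set Fs : C(U × I, Sph) := ⟨fun q => ⟨F q, hFmem q⟩, (hFc.subtype_mk hFmem)⟩ with hFs
  refine ⟨Fs.curry, ?_⟩
  intro a
  have hend : ∀ t : I, ((Fs.curry a) t : ℂ) = F (a, t) := fun t => rfl
  have h0 : ((Fs.curry a) 0 : ℂ) = ((a : Sph × Sph).1 : ℂ) := by
    rw [hend]
    simp [hF]
  have h1 : ((Fs.curry a) 1 : ℂ) = ((a : Sph × Sph).2 : ℂ) := by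
    rw [hend]
    simp only [hF]
    have e1 : (((1 : I) : ℝ) * (α + Complex.arg (h (a, 1)))) = α + Complex.arg (h (a, 1)) := by
      norm_num
    rw [e1, Complex.ofReal_add, add_mul, Complex.exp_add]
    have hu : Complex.exp ((Complex.arg (h (a, 1)) : ℂ) * Complex.I) = h (a, 1) := by
      have := Complex.norm_mul_exp_arg_mul_I (h (a, 1))
      rwa [habs (a, 1), Complex.ofReal_one, one_mul] at this
    rw [hu]
    simp only [hh, gmap]
    have hxne := sph_ne_zero (a : Sph × Sph).1
    have hexp : Complex.exp ((α : ℂ) * Complex.I) * Complex.exp (-(α : ℂ) * Complex.I) = 1 := by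
      rw [← Complex.exp_add,
        show (α : ℂ) * Complex.I + -(α : ℂ) * Complex.I = 0 by ring, Complex.exp_zero]
    set x : ℂ := ((a : Sph × Sph).1 : ℂ) with hx
    set y : ℂ := ((a : Sph × Sph).2 : ℂ) with hy
    set e : ℂ := Complex.exp ((α : ℂ) * Complex.I) with he
    set e' : ℂ := Complex.exp (-(α : ℂ) * Complex.I) with he'
    rw [show x * (e * (y / x * e')) = y * (e * e') * (x / x) by ring, hexp,
      div_self hxne, mul_one, mul_one]
  refine Prod.ext ?_ ?_ <;> [exact Subtype.ext h0; exact Subtype.ext h1]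

end

/-- There exist two open subsets `U₀, U₁` covering `S¹ × S¹`
(with `S¹` the unit circle in `ℂ`) such that the evaluation map
`e : C(I, S¹) → S¹ × S¹` admits a continuous section on each of them.
Equivalently, `TC(S¹) ≤ 1`. -/
theorem circle_TC_le_one :
    ∃ U₀ U₁ : Set (↥(Metric.sphere (0 : ℂ) 1) × ↥(Metric.sphere (0 : ℂ) 1)),
      IsOpen U₀ ∧ IsOpen U₁ ∧ U₀ ∪ U₁ = Set.univ ∧
      (∃ s : C(U₀, C(I, ↥(Metric.sphere (0 : ℂ) 1))),
        ∀ a, ((s a) 0, (s a) 1) =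
          (a : ↥(Metric.sphere (0 : ℂ) 1) × ↥(Metric.sphere (0 : ℂ) 1))) ∧
      (∃ s : C(U₁, C(I, ↥(Metric.sphere (0 : ℂ) 1))),
        ∀ a, ((s a) 0, (s a) 1) =
          (a : ↥(Metric.sphere (0 : ℂ) 1) × ↥(Metric.sphere (0 : ℂ) 1))) := by
  obtain ⟨U₀, hU₀open, hU₀eq, s₀⟩ := section_exists 0
  obtain ⟨U₁, hU₁open, hU₁eq, s₁⟩ := section_exists Real.pi
  refine ⟨U₀, U₁, hU₀open, hU₁open, ?_, s₀, s₁⟩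
  rw [Set.eq_univ_iff_forall]
  intro p
  by_cases h : gmap p = -1
  · right
    rw [hU₁eq]
    simp only [Set.mem_setOf_eq, h]
    rw [Complex.exp_pi_mul_I]
    norm_num
  · left
    rw [hU₀eq]
    simpa using h
end

section
/- For a topological space X, the evaluation map e : P(X) → X × X admits a continuous global section defined on all of X × X if and only if X is contractible. (Equivalently, TC(X) = 0 if and only if X is contractible, provided X is nonempty.) -/
open unitInterval

/-- For a (nonempty) topological space `X`, the evaluation map
`e : C(I, X) → X × X` admits a continuous global section on all of `X × X`
if and only if `X` is contractible. (Equivalently, `TC(X) = 0` iff `X` is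
contractible.) -/
theorem global_section_iff_contractible
    {X : Type*} [TopologicalSpace X] [Nonempty X] :
    (∃ s : C(X × X, C(I, X)), ∀ p, ((s p) 0, (s p) 1) = p) ↔
      ContractibleSpace X := by
  constructor
  · rintro ⟨s, hs⟩
    obtain ⟨c⟩ := ‹Nonempty X›
    rw [contractible_iff_id_nullhomotopic]
    refine ⟨c, ⟨{ toFun := fun p => s (p.2, c) p.1
                  continuous_toFun := ?_
                  map_zero_left := ?_
                  map_one_left := ?_ }⟩⟩
    · exact (ContinuousEval.continuous_eval (F := C(I, X))).comp
        ((s.continuous.comp (continuous_snd.prodMk continuous_const)).prodMk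
          continuous_fst)
    · intro x
      have := hs (x, c)
      simpa using congrArg Prod.fst this
    · intro x
      have := hs (x, c)
      simpa using congrArg Prod.snd this
  · intro h
    obtain ⟨c, ⟨H⟩⟩ := (contractible_iff_id_nullhomotopic X).mp h
    -- `γ x` is a path from `x` to `c`.
    have hγcont : Continuous ↿(fun x : X => (⟨⟨fun t => H (t, x), by fun_prop⟩,
        by simp, by simp⟩ : Path x c)) := by
      simp only [Function.HasUncurry.uncurry]
      exact H.continuous.comp (continuous_snd.prodMk continuous_fst)
    set γ : ∀ x : X, Path x c := fun x => ⟨⟨fun t => H (t, x), by fun_prop⟩, by simp, by simp⟩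
      with hγ
    set δ : ∀ p : X × X, Path p.1 p.2 :=
      fun p => (γ p.1).trans (γ p.2).symm with hδ
    have hδcont : Continuous ↿δ := by
      apply Path.trans_continuous_family
      · exact hγcont.comp (continuous_fst.fst.prodMk continuous_snd)
      · apply Path.symm_continuous_family
        exact hγcont.comp (continuous_fst.snd.prodMk continuous_snd)
    refine ⟨(ContinuousMap.mk ↿δ hδcont).curry, fun p => ?_⟩
    simp [ContinuousMap.curry, Function.HasUncurry.uncurry]
end

section
/- Let X and Y be topological spaces and let f : X → Y be a homotopy equivalence. If U₀, …, U_k are open subsets covering Y × Y such that the evaluation map e_Y : P(Y) → Y × Y admits a continuous section on each U_i, then the open sets (f × f)⁻¹(U₀), …, (f × f)⁻¹(U_k) cover X × X, and the evaluation map e_X : P(X) → X × X admits a continuous section on each (f × f)⁻¹(U_i). In particular, TC(X) ≤ TC(Y), and spaces of the same homotopy type have equal topological complexity. -/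
open unitInterval

/-- Path from `x` to `φ x` coming from a homotopy `φ ≃ id`. -/
def homotopyIdPath {X : Type*} [TopologicalSpace X] {φ : C(X, X)}
    (H : ContinuousMap.Homotopy φ (ContinuousMap.id X)) (x : X) :
    Path x (φ x) where
  toFun t := H (σ t, x)
  continuous_toFun := H.continuous.comp (by fun_prop)
  source' := by simp
  target' := by simp

lemma homotopyIdPath_joint {X : Type*} [TopologicalSpace X] {φ : C(X, X)}
    (H : ContinuousMap.Homotopy φ (ContinuousMap.id X)) {ι : Type*}
    [TopologicalSpace ι] {g : ι → X} (hg : Continuous g) :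
    Continuous ↿(fun i => homotopyIdPath H (g i)) := by
  have : ↿(fun i => homotopyIdPath H (g i)) =
      fun p : ι × I => H (σ p.2, g p.1) := rfl
  rw [this]
  exact H.continuous.comp (by fun_prop)

/-- If `f : X → Y` is a homotopy equivalence and `U₀, …, U_k` are
open subsets covering `Y × Y` on each of which the evaluation map
`e_Y : C(I, Y) → Y × Y` admits a continuous section, then the open sets
`(f × f)⁻¹(Uᵢ)` cover `X × X` and the evaluation map `e_X : C(I, X) → X × X`
admits a continuous section on each of them. In particular `TC(X) ≤ TC(Y)`. -/
theorem pullback_motion_planner_along_homotopy_equiv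
    {X Y : Type*} [TopologicalSpace X] [TopologicalSpace Y]
    (f : ContinuousMap.HomotopyEquiv X Y) {k : ℕ}
    (U : Fin (k + 1) → Set (Y × Y))
    (hopen : ∀ i, IsOpen (U i))
    (hcover : (⋃ i, U i) = Set.univ)
    (hsec : ∀ i, ∃ s : C(U i, C(I, Y)),
      ∀ a : U i, ((s a) 0, (s a) 1) = (a : Y × Y)) :
    (∀ i, IsOpen ((fun p : X × X => (f.toFun p.1, f.toFun p.2)) ⁻¹' U i)) ∧
    (⋃ i, (fun p : X × X => (f.toFun p.1, f.toFun p.2)) ⁻¹' U i) = Set.univ ∧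
    ∀ i, ∃ s : C(((fun p : X × X => (f.toFun p.1, f.toFun p.2)) ⁻¹' U i), C(I, X)),
      ∀ a, ((s a) 0, (s a) 1) = (a : X × X) := by
  classical
  have hcont : Continuous (fun p : X × X => (f.toFun p.1, f.toFun p.2)) := by
    fun_prop
  refine ⟨fun i => (hopen i).preimage hcont, ?_, ?_⟩
  · rw [← Set.preimage_iUnion, hcover, Set.preimage_univ]
  · intro i
    obtain ⟨s, hs⟩ := hsec i
    obtain ⟨H⟩ := f.left_inv
    set g : C(Y, X) := f.invFun with hgdef
    set V : Set (X × X) := (fun p : X × X => (f.toFun p.1, f.toFun p.2)) ⁻¹' U i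
      with hV
    -- the Y-path associated to `a : V`
    have hmem : ∀ a : V, ((f.toFun a.1.1, f.toFun a.1.2) : Y × Y) ∈ U i :=
      fun a => a.2
    let q : ∀ a : V, Path (f.toFun a.1.1) (f.toFun a.1.2) := fun a =>
      { toFun := s ⟨_, hmem a⟩
        continuous_toFun := (s ⟨_, hmem a⟩).continuous
        source' := congrArg Prod.fst (hs ⟨_, hmem a⟩)
        target' := congrArg Prod.snd (hs ⟨_, hmem a⟩) }
    have hq : Continuous ↿q := by
      have : ↿q = fun p : V × I => s ⟨_, hmem p.1⟩ p.2 := rfl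
      rw [this]
      have hc : Continuous fun a : V => s ⟨_, hmem a⟩ :=
        s.continuous.comp (Continuous.subtype_mk
          (hcont.comp continuous_subtype_val) _)
      exact continuous_eval.comp (hc.prodMap continuous_id)
    let p₁ : ∀ a : V, Path a.1.1 ((g.comp f.toFun) a.1.1) := fun a =>
      homotopyIdPath H a.1.1
    let p₂ : ∀ a : V, Path ((g.comp f.toFun) a.1.1) ((g.comp f.toFun) a.1.2) :=
      fun a => (q a).map g.continuous
    let p₃ : ∀ a : V, Path ((g.comp f.toFun) a.1.2) a.1.2 := fun a =>
      (homotopyIdPath H a.1.2).symm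
    have hp₁ : Continuous ↿p₁ :=
      homotopyIdPath_joint H ((continuous_fst.comp continuous_subtype_val))
    have hp₂ : Continuous ↿p₂ := by
      have : ↿p₂ = fun p : V × I => g ((↿q) p) := rfl
      rw [this]
      exact g.continuous.comp hq
    have hp₃ : Continuous ↿p₃ := by
      have : ↿p₃ = fun p : V × I =>
          (↿(fun a : V => homotopyIdPath H a.1.2)) (p.1, σ p.2) := rfl
      rw [this]
      exact (homotopyIdPath_joint H
        (continuous_snd.comp continuous_subtype_val)).comp (by fun_prop)
    let γ : ∀ a : V, Path a.1.1 a.1.2 := fun a => ((p₁ a).trans (p₂ a)).trans (p₃ a)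
    have hγ : Continuous ↿γ :=
      Path.trans_continuous_family _
        (Path.trans_continuous_family _ hp₁ _ hp₂) _ hp₃
    refine ⟨ContinuousMap.curry ⟨fun p : V × I => γ p.1 p.2, hγ⟩, ?_⟩
    intro a
    simp only [ContinuousMap.curry_apply, ContinuousMap.coe_mk]
    exact Prod.ext ((γ a).source) ((γ a).target)
end

section
/- Let X and Y be metrizable topological spaces with TC(X) = m and TC(Y) = n finite. Then the topological complexity of the product satisfies TC(X × Y) ≤ m + n; that is, X × Y × X × Y admits an open cover by m + n + 1 sets on each of which the evaluation map e : P(X × Y) → (X × Y) × (X × Y) admits a continuous section. -/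
open unitInterval

/-- A "motion planner" of size `n` for `X`: an open cover of `X × X` by `n` sets
on each of which the evaluation map `e : C(I, X) → X × X`, `e γ = (γ 0, γ 1)`,
admits a continuous section. -/
def HasMotionPlanner (X : Type*) [TopologicalSpace X] (n : ℕ) : Prop :=
  ∃ U : Fin n → Set (X × X),
    (∀ i, IsOpen (U i)) ∧ (⋃ i, U i) = Set.univ ∧
    ∀ i, ∃ s : C(U i, C(I, X)), ∀ a : U i, ((s a) 0, (s a) 1) = (a : X × X)

/-- The (reduced) topological complexity of `X`: one less than the smallest
cardinality of an open cover of `X × X` on each member of which the evaluation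
map admits a continuous section (`⊤` if no finite such cover exists). -/
noncomputable def TopComplexity (X : Type*) [TopologicalSpace X] : ℕ∞ :=
  ⨅ (k : ℕ) (_ : HasMotionPlanner X (k + 1)), (k : ℕ∞)

lemma glue_sections {Z W : Type*} [TopologicalSpace Z] [TopologicalSpace W] {ι : Type*}
    (P : ι → Set Z) (hP : ∀ i, IsOpen (P i))
    (hdisj : ∀ i j, (P i ∩ P j).Nonempty → i = j)
    (sec : ∀ i, C(P i, W)) :
    ∃ s : C(↥(⋃ i, P i), W),
      ∀ (i : ι) (z : Z) (hz : z ∈ P i) (hz' : z ∈ ⋃ i, P i), s ⟨z, hz'⟩ = sec i ⟨z, hz⟩ := by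
  classical
  set sf : ↥(⋃ i, P i) → W := fun z =>
    sec (Set.mem_iUnion.mp z.2).choose ⟨z.1, (Set.mem_iUnion.mp z.2).choose_spec⟩ with hsf
  have key : ∀ (i : ι) (z : Z) (hz : z ∈ P i) (hz' : z ∈ ⋃ i, P i), sf ⟨z, hz'⟩ = sec i ⟨z, hz⟩ := by
    intro i z hz hz'
    have h2 := (Set.mem_iUnion.mp hz').choose_spec
    have he : (Set.mem_iUnion.mp hz').choose = i := hdisj _ _ ⟨z, h2, hz⟩
    subst he
    rfl
  have hc : Continuous sf := by
    rw [continuous_iff_continuousAt]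
    intro z₀
    set i₀ := (Set.mem_iUnion.mp z₀.2).choose with hi₀
    have hz₀ : z₀.1 ∈ P i₀ := (Set.mem_iUnion.mp z₀.2).choose_spec
    have hO : IsOpen (Subtype.val ⁻¹' P i₀ : Set ↥(⋃ i, P i)) :=
      (hP i₀).preimage continuous_subtype_val
    refine ContinuousOn.continuousAt ?_ (hO.mem_nhds hz₀)
    rw [continuousOn_iff_continuous_restrict]
    have : (Subtype.val ⁻¹' P i₀ : Set ↥(⋃ i, P i)).restrict sf
        = fun z => sec i₀ ⟨z.1.1, z.2⟩ := by
      funext z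
      exact key i₀ z.1.1 z.2 z.1.2
    refine (congrArg Continuous this).mpr ?_
    exact (sec i₀).continuous.comp
      ((continuous_subtype_val.comp continuous_subtype_val).subtype_mk _)
  exact ⟨⟨sf, hc⟩, key⟩

lemma planner_mono {X : Type*} [TopologicalSpace X] {a b : ℕ} (h : a ≤ b)
    (hp : HasMotionPlanner X a) : HasMotionPlanner X b := by
  obtain ⟨U, hUo, hUc, hUs⟩ := hp
  refine ⟨fun i => if h' : (i : ℕ) < a then U ⟨i, h'⟩ else ∅, fun i => ?_, ?_, fun i => ?_⟩
  · dsimp only; split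
    · exact hUo _
    · exact isOpen_empty
  · rw [Set.eq_univ_iff_forall]
    intro x
    have : x ∈ ⋃ i, U i := by rw [hUc]; trivial
    obtain ⟨j, hj⟩ := Set.mem_iUnion.mp this
    refine Set.mem_iUnion.mpr ⟨⟨(j : ℕ), lt_of_lt_of_le j.2 h⟩, ?_⟩
    simpa [j.2] using hj
  · dsimp only
    show ∃ s : C(↥(if h' : (i : ℕ) < a then U ⟨i, h'⟩ else ∅), C(I, X)),
      ∀ a_1 : ↥(if h' : (i : ℕ) < a then U ⟨i, h'⟩ else ∅), ((s a_1) 0, (s a_1) 1) = (a_1 : X × X)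
    by_cases h' : (i : ℕ) < a
    · rw [dif_pos h']
      exact hUs ⟨i, h'⟩
    · rw [dif_neg h']
      haveI : IsEmpty ↥(∅ : Set (X × X)) := ⟨fun z => Set.notMem_empty _ z.2⟩
      refine ⟨⟨fun z => isEmptyElim z, ?_⟩, fun z => isEmptyElim z⟩
      exact continuous_def.mpr fun s _ => by
        rw [Set.eq_empty_of_isEmpty ((fun z : ↥(∅ : Set (X × X)) => (isEmptyElim z : C(I, X))) ⁻¹' s)]
        exact isOpen_empty

lemma planner_of_TC {X : Type*} [TopologicalSpace X] {m : ℕ} (h : TopComplexity X = (m : ℕ∞)) :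
    HasMotionPlanner X (m + 1) := by
  obtain ⟨k, hk, hkm⟩ : ∃ k, HasMotionPlanner X (k + 1) ∧ k ≤ m := by
    by_contra hc
    push_neg at hc
    have h1 : ((m + 1 : ℕ) : ℕ∞) ≤ TopComplexity X :=
      le_iInf fun k => le_iInf fun hk => by exact_mod_cast Nat.succ_le_of_lt (hc k hk)
    rw [h] at h1
    have := Nat.cast_le.mp h1
    omega
  exact planner_mono (by omega) hk

lemma planner_prod {X Y : Type*} [TopologicalSpace X] [TopologicalSpace Y]
    [NormalSpace (X × X)] [ParacompactSpace (X × X)]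
    [NormalSpace (Y × Y)] [ParacompactSpace (Y × Y)]
    {a b : ℕ} (hX : HasMotionPlanner X (a + 1)) (hY : HasMotionPlanner Y (b + 1)) :
    HasMotionPlanner (X × Y) (a + b + 1) := by
  classical
  obtain ⟨U, hUo, hUc, hUs⟩ := hX
  obtain ⟨V, hVo, hVc, hVs⟩ := hY
  choose sU hsU using hUs
  choose sV hsV using hVs
  obtain ⟨f, hf⟩ := PartitionOfUnity.exists_isSubordinate (s := (Set.univ : Set (X × X)))
    isClosed_univ U hUo (by rw [hUc])
  obtain ⟨g, hg⟩ := PartitionOfUnity.exists_isSubordinate (s := (Set.univ : Set (Y × Y)))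
    isClosed_univ V hVo (by rw [hVc])
  classical
  set pX : (X × Y) × (X × Y) → X × X := fun z => (z.1.1, z.2.1) with hpX
  set pY : (X × Y) × (X × Y) → Y × Y := fun z => (z.1.2, z.2.2) with hpY
  have hpXc : Continuous pX := by fun_prop
  have hpYc : Continuous pY := by fun_prop
  set F : Fin (a+1) → Fin (b+1) → (X × Y) × (X × Y) → ℝ :=
    fun i j z => f i (pX z) * g j (pY z) with hF
  have hFc : ∀ i j, Continuous (F i j) :=
    fun i j => ((f i).continuous.comp hpXc).mul ((g j).continuous.comp hpYc)
  set W : Finset (Fin (a+1)) → Finset (Fin (b+1)) → Set ((X × Y) × (X × Y)) :=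
    fun S T => ⋂ p ∈ S ×ˢ T, ({z | 0 < F p.1 p.2 z} ∩
      ⋂ q ∈ (S ×ˢ T)ᶜ, {z | F q.1 q.2 z < F p.1 p.2 z}) with hWdef
  have hWo : ∀ S T, IsOpen (W S T) := by
    intro S T
    refine isOpen_biInter_finset fun p _ => (isOpen_lt continuous_const (hFc p.1 p.2)).inter ?_
    exact isOpen_biInter_finset fun q _ => isOpen_lt (hFc q.1 q.2) (hFc p.1 p.2)
  have hWmem : ∀ S T z, z ∈ W S T ↔ ∀ i ∈ S, ∀ j ∈ T, 0 < F i j z ∧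
      ∀ i' j', ¬(i' ∈ S ∧ j' ∈ T) → F i' j' z < F i j z := by
    intro S T z
    constructor
    · intro hz i hi j hj
      have h := Set.mem_iInter₂.mp hz (i, j) (Finset.mem_product.mpr ⟨hi, hj⟩)
      refine ⟨h.1, fun i' j' hq => ?_⟩
      exact Set.mem_iInter₂.mp h.2 (i', j')
        (Finset.mem_compl.mpr (fun hc => hq ⟨(Finset.mem_product.mp hc).1, (Finset.mem_product.mp hc).2⟩))
    · intro hz
      refine Set.mem_iInter₂.mpr fun p hp => ?_
      obtain ⟨hp1, hp2⟩ := Finset.mem_product.mp hp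
      refine ⟨(hz p.1 hp1 p.2 hp2).1, Set.mem_iInter₂.mpr fun q hq => ?_⟩
      exact (hz p.1 hp1 p.2 hp2).2 q.1 q.2
        (fun hc => Finset.mem_compl.mp hq (Finset.mem_product.mpr ⟨hc.1, hc.2⟩))
  -- cover
  have hcov : ∀ z : (X × Y) × (X × Y), ∃ S T, S.Nonempty ∧ T.Nonempty ∧ z ∈ W S T := by
    intro z
    obtain ⟨i₀, -, hi₀⟩ := Finset.exists_max_image (Finset.univ : Finset (Fin (a+1)))
      (fun i => f i (pX z)) Finset.univ_nonempty
    obtain ⟨j₀, -, hj₀⟩ := Finset.exists_max_image (Finset.univ : Finset (Fin (b+1)))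
      (fun j => g j (pY z)) Finset.univ_nonempty
    have hMf : 0 < f i₀ (pX z) := by
      by_contra hle
      push_neg at hle
      have hsum := f.sum_eq_one (Set.mem_univ (pX z))
      rw [finsum_eq_sum_of_fintype] at hsum
      have : (∑ i, f i (pX z)) ≤ 0 := Finset.sum_nonpos fun i _ =>
        le_trans (hi₀ i (Finset.mem_univ i)) hle
      rw [hsum] at this
      linarith
    have hMg : 0 < g j₀ (pY z) := by
      by_contra hle
      push_neg at hle
      have hsum := g.sum_eq_one (Set.mem_univ (pY z))
      rw [finsum_eq_sum_of_fintype] at hsum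
      have : (∑ j, g j (pY z)) ≤ 0 := Finset.sum_nonpos fun j _ =>
        le_trans (hj₀ j (Finset.mem_univ j)) hle
      rw [hsum] at this
      linarith
    refine ⟨Finset.univ.filter (fun i => f i (pX z) = f i₀ (pX z)),
            Finset.univ.filter (fun j => g j (pY z) = g j₀ (pY z)),
            ⟨i₀, by simp⟩, ⟨j₀, by simp⟩, ?_⟩
    rw [hWmem]
    intro i hi j hj
    rw [Finset.mem_filter] at hi hj
    have hfi : f i (pX z) = f i₀ (pX z) := hi.2
    have hgj : g j (pY z) = g j₀ (pY z) := hj.2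
    constructor
    · show 0 < f i (pX z) * g j (pY z)
      rw [hfi, hgj]; exact mul_pos hMf hMg
    · intro i' j' hq
      show f i' (pX z) * g j' (pY z) < f i (pX z) * g j (pY z)
      rw [hfi, hgj]
      rcases not_and_or.mp hq with hi' | hj'
      · have hlt : f i' (pX z) < f i₀ (pX z) := by
          rcases lt_or_eq_of_le (hi₀ i' (Finset.mem_univ i')) with h | h
          · exact h
          · exact absurd (Finset.mem_filter.mpr ⟨Finset.mem_univ i', h⟩) hi'
        calc f i' (pX z) * g j' (pY z) ≤ f i' (pX z) * g j₀ (pY z) :=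
              mul_le_mul_of_nonneg_left (hj₀ j' (Finset.mem_univ j')) (f.nonneg i' _)
          _ < f i₀ (pX z) * g j₀ (pY z) := by
              exact mul_lt_mul_of_pos_right hlt hMg
      · have hlt : g j' (pY z) < g j₀ (pY z) := by
          rcases lt_or_eq_of_le (hj₀ j' (Finset.mem_univ j')) with h | h
          · exact h
          · exact absurd (Finset.mem_filter.mpr ⟨Finset.mem_univ j', h⟩) hj'
        calc f i' (pX z) * g j' (pY z) ≤ f i₀ (pX z) * g j' (pY z) :=
              mul_le_mul_of_nonneg_right (hi₀ i' (Finset.mem_univ i')) (g.nonneg j' _)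
          _ < f i₀ (pX z) * g j₀ (pY z) := mul_lt_mul_of_pos_left hlt hMf
  -- disjointness
  have hdisj : ∀ S T S' T' : _, S.Nonempty → T.Nonempty → S'.Nonempty → T'.Nonempty →
      S.card + T.card = S'.card + T'.card → (W S T ∩ W S' T').Nonempty → S = S' ∧ T = T' := by
    intro S T S' T' hS hT hS' hT' hcard ⟨z, hz1, hz2⟩
    rw [hWmem] at hz1 hz2
    by_cases hsub : ∀ i ∈ S, ∀ j ∈ T, i ∈ S' ∧ j ∈ T'
    · have hSS : S ⊆ S' := fun i hi => (hsub i hi _ hT.choose_spec).1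
      have hTT : T ⊆ T' := fun j hj => (hsub _ hS.choose_spec j hj).2
      have h1 : S.card ≤ S'.card := Finset.card_le_card hSS
      have h2 : T.card ≤ T'.card := Finset.card_le_card hTT
      exact ⟨Finset.eq_of_subset_of_card_le hSS (by omega),
             Finset.eq_of_subset_of_card_le hTT (by omega)⟩
    · push_neg at hsub
      obtain ⟨i, hi, j, hj, hq⟩ := hsub
      have hsub' : ∀ i' ∈ S', ∀ j' ∈ T', i' ∈ S ∧ j' ∈ T := by
        intro i' hi' j' hj'
        by_contra hq'
        have h1 : F i' j' z < F i j z := (hz1 i hi j hj).2 i' j' hq'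
        have h2 : F i j z < F i' j' z := (hz2 i' hi' j' hj').2 i j (fun hc => hq hc.1 hc.2)
        exact absurd h1 (not_lt.mpr (le_of_lt h2))
      have hSS : S' ⊆ S := fun i' hi' => (hsub' i' hi' _ hT'.choose_spec).1
      have hTT : T' ⊆ T := fun j' hj' => (hsub' _ hS'.choose_spec j' hj').2
      have h1 : S'.card ≤ S.card := Finset.card_le_card hSS
      have h2 : T'.card ≤ T.card := Finset.card_le_card hTT
      exact ⟨(Finset.eq_of_subset_of_card_le hSS (by omega)).symm,
             (Finset.eq_of_subset_of_card_le hTT (by omega)).symm⟩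
  -- sections on pieces
  have hsec : ∀ S T, S.Nonempty → T.Nonempty →
      ∃ sec : C(↥(W S T), C(I, X × Y)),
        ∀ z : ↥(W S T), ((sec z) 0, (sec z) 1) = (z : (X × Y) × (X × Y)) := by
    intro S T hS hT
    obtain ⟨i, hi⟩ := hS
    obtain ⟨j, hj⟩ := hT
    have hmemU : ∀ z : ↥(W S T), pX z.1 ∈ U i := by
      intro z
      have h := ((hWmem S T z.1).mp z.2 i hi j hj).1
      have h' : 0 < f i (pX z.1) * g j (pY z.1) := h
      have hfi : f i (pX z.1) ≠ 0 := by
        intro h0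
        rw [h0, zero_mul] at h'
        exact lt_irrefl 0 h'
      exact hf i (subset_tsupport _ (Function.mem_support.mpr hfi))
    have hmemV : ∀ z : ↥(W S T), pY z.1 ∈ V j := by
      intro z
      have h := ((hWmem S T z.1).mp z.2 i hi j hj).1
      have h' : 0 < f i (pX z.1) * g j (pY z.1) := h
      have hgj : g j (pY z.1) ≠ 0 := by
        intro h0
        rw [h0, mul_zero] at h'
        exact lt_irrefl 0 h'
      exact hg j (subset_tsupport _ (Function.mem_support.mpr hgj))
    set uX : ↥(W S T) → ↥(U i) := fun z => ⟨pX z.1, hmemU z⟩ with huXdef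
    have huX : Continuous uX := (hpXc.comp continuous_subtype_val).subtype_mk _
    set uY : ↥(W S T) → ↥(V j) := fun z => ⟨pY z.1, hmemV z⟩ with huYdef
    have huY : Continuous uY := (hpYc.comp continuous_subtype_val).subtype_mk _
    set secf : ↥(W S T) → C(I, X × Y) :=
      fun z => ((sU i) (uX z)).prodMk ((sV j) (uY z)) with hsecf
    have hcont : Continuous secf := by
      apply ContinuousMap.continuous_of_continuous_uncurry
      have h1 : Continuous (Function.uncurry fun z t => (sU i) (uX z) t) :=
        ContinuousMap.continuous_uncurry_of_continuous ((sU i).comp ⟨uX, huX⟩)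
      have h2 : Continuous (Function.uncurry fun z t => (sV j) (uY z) t) :=
        ContinuousMap.continuous_uncurry_of_continuous ((sV j).comp ⟨uY, huY⟩)
      exact h1.prodMk h2
    refine ⟨⟨secf, hcont⟩, ?_⟩
    intro z
    have h1 := hsU i (uX z)
    have h2 := hsV j (uY z)
    have e1 : (sU i) (uX z) 0 = z.1.1.1 := congrArg Prod.fst h1
    have e2 : (sU i) (uX z) 1 = z.1.2.1 := congrArg Prod.snd h1
    have e3 : (sV j) (uY z) 0 = z.1.1.2 := congrArg Prod.fst h2
    have e4 : (sV j) (uY z) 1 = z.1.2.2 := congrArg Prod.snd h2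
    show (((sU i) (uX z) 0, (sV j) (uY z) 0), ((sU i) (uX z) 1, (sV j) (uY z) 1)) = z.1
    rw [e1, e2, e3, e4]
  choose secP hsecP using hsec
  -- assemble
  refine ⟨fun k => ⋃ p : {p : Finset (Fin (a+1)) × Finset (Fin (b+1)) //
      p.1.Nonempty ∧ p.2.Nonempty ∧ p.1.card + p.2.card = (k : ℕ) + 2},
      W p.1.1 p.1.2, fun k => isOpen_iUnion fun p => hWo _ _, ?_, fun k => ?_⟩
  · rw [Set.eq_univ_iff_forall]
    intro z
    obtain ⟨S, T, hS, hT, hzW⟩ := hcov z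
    have hs1 : 1 ≤ S.card := hS.card_pos
    have ht1 : 1 ≤ T.card := hT.card_pos
    have hs2 : S.card ≤ a + 1 := by
      simpa using Finset.card_le_univ S
    have ht2 : T.card ≤ b + 1 := by
      simpa using Finset.card_le_univ T
    refine Set.mem_iUnion.mpr ⟨⟨S.card + T.card - 2, by omega⟩, ?_⟩
    exact Set.mem_iUnion.mpr ⟨⟨(S, T), hS, hT, by simp; omega⟩, hzW⟩
  · obtain ⟨sec, hsec'⟩ := glue_sections
      (ι := {p : Finset (Fin (a+1)) × Finset (Fin (b+1)) //
        p.1.Nonempty ∧ p.2.Nonempty ∧ p.1.card + p.2.card = (k : ℕ) + 2})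
      (fun p => W p.1.1 p.1.2) (fun p => hWo _ _)
      (fun p q hpq => by
        obtain ⟨hSeq, hTeq⟩ := hdisj _ _ _ _ p.2.1 p.2.2.1 q.2.1 q.2.2.1
          (by rw [p.2.2.2, q.2.2.2]) hpq
        exact Subtype.ext (Prod.ext hSeq hTeq))
      (fun p => secP p.1.1 p.1.2 p.2.1 p.2.2.1)
    refine ⟨sec, ?_⟩
    rintro ⟨z, hz⟩
    obtain ⟨p, hp⟩ := Set.mem_iUnion.mp hz
    rw [hsec' p z hp hz]
    exact hsecP p.1.1 p.1.2 p.2.1 p.2.2.1 ⟨z, hp⟩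

/-- For metrizable spaces `X`, `Y` with `TopComplexity(X) = m` and `TopComplexity(Y) = n`
finite, one has `TopComplexity(X × Y) ≤ m + n`; that is, `(X × Y) × (X × Y)` admits an open
cover by `m + n + 1` sets on each of which the evaluation map admits a continuous
section. -/
theorem TC_product_le
    {X Y : Type*} [TopologicalSpace X] [TopologicalSpace Y]
    [TopologicalSpace.MetrizableSpace X] [TopologicalSpace.MetrizableSpace Y]
    {m n : ℕ} (hX : TopComplexity X = (m : ℕ∞)) (hY : TopComplexity Y = (n : ℕ∞)) :
    TopComplexity (X × Y) ≤ ((m + n : ℕ) : ℕ∞) ∧ HasMotionPlanner (X × Y) (m + n + 1) := by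
  letI : MetricSpace X := TopologicalSpace.metrizableSpaceMetric X
  letI : MetricSpace Y := TopologicalSpace.metrizableSpaceMetric Y
  have hp : HasMotionPlanner (X × Y) (m + n + 1) :=
    planner_prod (planner_of_TC hX) (planner_of_TC hY)
  exact ⟨iInf_le_of_le (m + n) (iInf_le _ hp), hp⟩
end
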